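/- Let M ∈ ℝ^{n×n} be a symmetric positive semidefinite matrix. Then M ⪯ n·Diag(M), where Diag(M) is the diagonal matrix with the same diagonal entries as M; that is, n·Diag(M) − M is positive semidefinite. -/

import Mathlib

open Matrix

/-- If `M ∈ ℝ^{n×n}` is symmetric positive semidefinite, then
`M ⪯ n·Diag(M)`, i.e. `n·Diag(M) − M` is positive semidefinite, where `Diag(M)`
is the diagonal matrix with the same diagonal entries as `M`. -/
theorem posSemidef_smul_diagonal_sub {n : ℕ} (M : Matrix (Fin n) (Fin n) ℝ)
    (hM : M.PosSemidef) :
    ((n : ℝ) • Matrix.diagonal (Matrix.diag M) - M).PosSemidef := by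
  obtain ⟨B, rfl⟩ : ∃ B : Matrix (Fin n) (Fin n) ℝ, M = Bᴴ * B := by
    open scoped MatrixOrder in
    exact ⟨CFC.sqrt M, by
      rw [← Matrix.star_eq_conjTranspose, (CFC.sqrt_nonneg M).isSelfAdjoint.star_eq, CFC.sqrt_mul_sqrt_self M hM.nonneg]⟩
  refine Matrix.PosSemidef.of_dotProduct_mulVec_nonneg ?_ ?_
  · have h1 := hM.1
    unfold Matrix.IsHermitian at *
    rw [Matrix.conjTranspose_sub, Matrix.conjTranspose_smul, Matrix.diagonal_conjTranspose, h1]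
    norm_num
  · intro x
    have hsx : star x = x := by simp
    have h2 : dotProduct x ((Bᴴ * B) *ᵥ x) = ∑ i, (∑ j, B i j * x j)^2 := by
      rw [← Matrix.mulVec_mulVec, dotProduct_mulVec]
      have : x ᵥ* Bᴴ = B *ᵥ x := by
        ext i
        simp [Matrix.vecMul, Matrix.mulVec, dotProduct, mul_comm]
      rw [this]
      simp [dotProduct, Matrix.mulVec, sq]
    have h1 : dotProduct x (((n : ℝ) • Matrix.diagonal (Matrix.diag (Bᴴ * B))) *ᵥ x)
        = (n : ℝ) * ∑ j, (∑ i, (B i j)^2) * (x j)^2 := by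
      rw [Matrix.smul_mulVec, dotProduct_smul]
      simp only [smul_eq_mul]
      congr 1
      simp [dotProduct, Matrix.mulVec_diagonal, Matrix.diag, Matrix.mul_apply, sq,
        Finset.sum_mul]
      apply Finset.sum_congr rfl; intro j _; rw [Finset.mul_sum]; apply Finset.sum_congr rfl; intro i _; ring
    have key : dotProduct (star x)
          (Matrix.mulVec ((n : ℝ) • Matrix.diagonal (Matrix.diag (Bᴴ * B)) - Bᴴ * B) x)
        = (n : ℝ) * ∑ j, (∑ i, (B i j)^2) * (x j)^2 - ∑ i, (∑ j, B i j * x j)^2 := by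
      rw [hsx, Matrix.sub_mulVec, dotProduct_sub, h1, h2]
    rw [key]
    rw [sub_nonneg]
    calc ∑ i, (∑ j, B i j * x j)^2
        ≤ ∑ i, (n : ℝ) * ∑ j, (B i j * x j)^2 := by
          apply Finset.sum_le_sum
          intro i _
          simpa using sq_sum_le_card_mul_sum_sq (s := Finset.univ) (f := fun j => B i j * x j)
      _ = (n : ℝ) * ∑ j, (∑ i, (B i j)^2) * (x j)^2 := by
          rw [← Finset.mul_sum, Finset.sum_comm]
          congr 1
          apply Finset.sum_congr rfl
          intro j _
          rw [Finset.sum_mul]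
          apply Finset.sum_congr rfl
          intro i _
          ring
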